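/- Let B be an annihilator nilpotent skew brace. If Ann(B) is finite and B is finitely generated as a skew brace, then B is finite. -/

import Mathlib

/-- A skew brace: a type with two group structures `(B,+)` and `(B,∘)`
(the multiplicative group is written with `*`) sharing the same underlying set,
such that `a ∘ (b + c) = a ∘ b - a + a ∘ c`. -/
class SkewBrace (B : Type*) extends AddGroup B, Group B where
  circ_add : ∀ a b c : B, a * (b + c) = a * b - a + a * c

namespace SkewBrace

variable {B : Type*} [SkewBrace B]

/-- `lam a b = -a + a ∘ b`, i.e. `λ_a(b)`. -/
def lam (a b : B) : B := -a + a * b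

/-- `a * b` (the star operation) `= λ_a(b) - b = -a + a ∘ b - b`. -/
def starOp (a b : B) : B := -a + a * b - b

/-- `X * Y` : the additive subgroup generated by all `x * y`, `x ∈ X`, `y ∈ Y`,
regarded as a set. -/
def starSpan (X Y : Set B) : Set B :=
  (AddSubgroup.closure {z : B | ∃ x ∈ X, ∃ y ∈ Y, z = starOp x y} : AddSubgroup B)

/-- `[X,Y]₊` : the additive subgroup generated by all additive commutators
`x + y - x - y`, `x ∈ X`, `y ∈ Y`, regarded as a set. -/
def addCommSpan (X Y : Set B) : Set B :=
  (AddSubgroup.closure {z : B | ∃ x ∈ X, ∃ y ∈ Y, z = x + y - x - y} : AddSubgroup B)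

/-- A sub skew brace: a subset containing `0` and closed under both group
operations and both inverses. -/
def IsSubSkewBrace (S : Set B) : Prop :=
  0 ∈ S ∧ (∀ a ∈ S, ∀ b ∈ S, a + b ∈ S) ∧ (∀ a ∈ S, -a ∈ S) ∧
    (∀ a ∈ S, ∀ b ∈ S, a * b ∈ S) ∧ (∀ a ∈ S, a⁻¹ ∈ S)

/-- An ideal: a sub skew brace that is normal in `(B,+)` and in `(B,∘)` and
invariant under all `λ_a`. -/
def IsIdeal (S : Set B) : Prop :=
  IsSubSkewBrace S ∧ (∀ a : B, ∀ i ∈ S, a + i - a ∈ S) ∧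
    (∀ a : B, ∀ i ∈ S, a * i * a⁻¹ ∈ S) ∧ (∀ a : B, ∀ i ∈ S, lam a i ∈ S)

/-- The annihilator `Ann(B) = {x | x∘a = a∘x = x+a = a+x for all a}`. -/
def annSet (B : Type*) [SkewBrace B] : Set B :=
  {x | ∀ a : B, x * a = a * x ∧ x * a = x + a ∧ x + a = a + x}

/-- The annihilator series: `Ann₀(B) = 0` and `Ann_{n+1}(B)` is the preimage of
`Ann(B/Annₙ(B))` under the quotient map; membership is expressed via coset
equalities modulo `Annₙ(B)`. -/
def annSeries (B : Type*) [SkewBrace B] : ℕ → Set B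
  | 0 => {0}
  | n + 1 => {x | ∀ a : B,
      x * a - a * x ∈ annSeries B n ∧
      x * a - (x + a) ∈ annSeries B n ∧
      (x + a) - (a + x) ∈ annSeries B n}

/-- `B` is annihilator nilpotent if `Annₙ(B) = B` for some `n`. -/
def AnnNilpotent (B : Type*) [SkewBrace B] : Prop :=
  ∃ n : ℕ, annSeries B n = Set.univ

/-- `leftPow B n` is `B^{n+1}`: `B¹ = B`, `B^{n+1} = B * Bⁿ`. -/
def leftPow (B : Type*) [SkewBrace B] : ℕ → Set B
  | 0 => Set.univ
  | n + 1 => starSpan Set.univ (leftPow B n)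

/-- `rightPow B n` is `B⁽ⁿ⁺¹⁾`: `B⁽¹⁾ = B`, `B⁽ⁿ⁺¹⁾ = B⁽ⁿ⁾ * B`. -/
def rightPow (B : Type*) [SkewBrace B] : ℕ → Set B
  | 0 => Set.univ
  | n + 1 => starSpan (rightPow B n) Set.univ

/-- `B` is left nilpotent if `Bⁿ = 0` for some `n ≥ 1`. -/
def LeftNilpotent (B : Type*) [SkewBrace B] : Prop :=
  ∃ n : ℕ, leftPow B n = ({0} : Set B)

/-- `B` is right nilpotent if `B⁽ⁿ⁾ = 0` for some `n ≥ 1`. -/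
def RightNilpotent (B : Type*) [SkewBrace B] : Prop :=
  ∃ n : ℕ, rightPow B n = ({0} : Set B)

/-- `strongPow B n` is `B^[n+1]`: `B^[1] = B`, and `B^[n+1]` is the additive
subgroup generated by `⋃_{i=1}^{n} B^[i] * B^[n+1-i]`. -/
def strongPow (B : Type*) [SkewBrace B] : ℕ → Set B
  | 0 => Set.univ
  | n + 1 => (AddSubgroup.closure (⋃ j : Fin (n + 1),
      {z : B | ∃ x ∈ strongPow B j.1, ∃ y ∈ strongPow B (n - j.1), z = starOp x y}) :
        AddSubgroup B)
  decreasing_by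
  · exact j.isLt
  · omega

/-- `B` is strongly nilpotent if `B^[n] = 0` for some `n ≥ 1`. -/
def StronglyNilpotent (B : Type*) [SkewBrace B] : Prop :=
  ∃ n : ℕ, strongPow B n = ({0} : Set B)

/-- `gammaAux B n` is `Γ_[n+1](B)`: `Γ_[1](B) = B` and, for `n ≥ 2`, `Γ_[n](B)` is
the additive subgroup generated by the sets `Γ_[i](B) * Γ_[n-i](B)` and
`[Γ_[i](B), Γ_[n-i](B)]₊` for `1 ≤ i ≤ n-1`. -/
def gammaAux (B : Type*) [SkewBrace B] : ℕ → Set B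
  | 0 => Set.univ
  | n + 1 => (AddSubgroup.closure (⋃ j : Fin (n + 1),
      {z : B | ∃ x ∈ gammaAux B j.1, ∃ y ∈ gammaAux B (n - j.1),
        z = starOp x y ∨ z = x + y - x - y}) : AddSubgroup B)
  decreasing_by
  · exact j.isLt
  · omega

/-- `Γ_[n](B)` for `n ≥ 1` (one-based indexing as in the paper). -/
def gammaBr (B : Type*) [SkewBrace B] (n : ℕ) : Set B := gammaAux B (n - 1)

/-- `B` is finitely generated as a skew brace: there is a finite subset whose
smallest containing sub skew brace is `B` itself. -/
def SBFinitelyGenerated (B : Type*) [SkewBrace B] : Prop :=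
  ∃ S : Set B, S.Finite ∧ ∀ T : Set B, IsSubSkewBrace T → S ⊆ T → T = Set.univ

/-- `B` satisfies the ascending chain condition on sub skew braces. -/
def ACCSubSkewBrace (B : Type*) [SkewBrace B] : Prop :=
  ∀ f : ℕ → Set B, (∀ n, IsSubSkewBrace (f n)) → (∀ n, f n ⊆ f (n + 1)) →
    ∃ N : ℕ, ∀ n, N ≤ n → f n = f N



/-! ### Basic identities -/

lemma mul_zero_right (a : B) : a * (0 : B) = a := by
  have h := circ_add a 0 0
  rw [add_zero] at h
  have h2 : a * 0 - a = 0 := right_eq_add.mp h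
  exact sub_eq_zero.mp h2

lemma one_eq_zero' : (1 : B) = 0 := by
  have h := mul_zero_right (1 : B)
  rw [one_mul] at h
  exact h.symm

lemma zero_mul_left (a : B) : (0 : B) * a = a := by
  rw [← one_eq_zero', one_mul]

lemma mul_eq_add_lam (a b : B) : a * b = a + lam a b := by
  unfold lam; rw [add_neg_cancel_left]

lemma lam_add (a b c : B) : lam a (b + c) = lam a b + lam a c := by
  unfold lam
  rw [circ_add, sub_eq_add_neg, add_assoc, add_assoc]

lemma lam_zero (a : B) : lam a (0 : B) = 0 := by
  unfold lam; rw [mul_zero_right, neg_add_cancel]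

lemma lam_neg (a b : B) : lam a (-b) = - lam a b := by
  have h : lam a b + lam a (-b) = 0 := by
    rw [← lam_add, add_neg_cancel, lam_zero]
  exact eq_neg_of_add_eq_zero_right h

lemma mul_neg_right (a b : B) : a * (-b) = a - a * b + a := by
  have h := circ_add a b (-b)
  rw [add_neg_cancel, mul_zero_right] at h
  have h2 : a * b - a + a * (-b) = a := h.symm
  have h3 : a * (-b) = -(a * b - a) + a := eq_neg_add_iff_add_eq.mpr h2
  rw [h3, neg_sub]

lemma lam_mul (a b c : B) : lam (a * b) c = lam a (lam b c) := by
  have h : (a * b) + lam (a * b) c = (a * b) + lam a (lam b c) := by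
    rw [← mul_eq_add_lam, mul_assoc, mul_eq_add_lam a b, add_assoc, ← lam_add,
      ← mul_eq_add_lam b c, ← mul_eq_add_lam a (b * c)]
  exact add_left_cancel h

lemma lam_one (c : B) : lam (1 : B) c = c := by
  unfold lam; rw [one_mul, one_eq_zero', neg_zero, zero_add]

lemma lam_lam_inv (a c : B) : lam a (lam a⁻¹ c) = c := by
  rw [← lam_mul, mul_inv_cancel, lam_one]

lemma lam_inv_lam (a c : B) : lam a⁻¹ (lam a c) = c := by
  rw [← lam_mul, inv_mul_cancel, lam_one]

/-! ### Annihilator basic API -/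

lemma ann_mul_comm {z : B} (hz : z ∈ annSet B) (a : B) : z * a = a * z := (hz a).1
lemma ann_mul_add {z : B} (hz : z ∈ annSet B) (a : B) : z * a = z + a := (hz a).2.1
lemma ann_add_comm {z : B} (hz : z ∈ annSet B) (a : B) : z + a = a + z := (hz a).2.2

lemma ann_mul_right {z : B} (hz : z ∈ annSet B) (a : B) : a * z = a + z := by
  rw [← ann_mul_comm hz, ann_mul_add hz, ann_add_comm hz]

lemma lam_ann {z : B} (hz : z ∈ annSet B) (a : B) : lam a z = z := by
  unfold lam; rw [ann_mul_right hz, neg_add_cancel_left]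

lemma lam_of_ann {z : B} (hz : z ∈ annSet B) (a : B) : lam z a = a := by
  unfold lam; rw [ann_mul_add hz, neg_add_cancel_left]

lemma ann_zero : (0 : B) ∈ annSet B := fun a =>
  ⟨by rw [zero_mul_left, mul_zero_right], by rw [zero_mul_left, zero_add],
    by rw [zero_add, add_zero]⟩

lemma ann_add {z z' : B} (hz : z ∈ annSet B) (hz' : z' ∈ annSet B) :
    z + z' ∈ annSet B := by
  intro a
  refine ⟨?_, ?_, ?_⟩
  · calc (z + z') * a = (z * z') * a := by rw [ann_mul_add hz z']
    _ = z * (z' * a) := mul_assoc _ _ _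
    _ = z * (a * z') := by rw [ann_mul_comm hz' a]
    _ = (z * a) * z' := (mul_assoc _ _ _).symm
    _ = (a * z) * z' := by rw [ann_mul_comm hz a]
    _ = a * (z * z') := mul_assoc _ _ _
    _ = a * (z + z') := by rw [ann_mul_add hz z']
  · calc (z + z') * a = (z * z') * a := by rw [ann_mul_add hz z']
    _ = z * (z' * a) := mul_assoc _ _ _
    _ = z + (z' * a) := ann_mul_add hz _
    _ = z + (z' + a) := by rw [ann_mul_add hz' a]
    _ = (z + z') + a := (add_assoc _ _ _).symm
  · calc (z + z') + a = z + (z' + a) := add_assoc _ _ _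
    _ = z + (a + z') := by rw [ann_add_comm hz' a]
    _ = (z + a) + z' := (add_assoc _ _ _).symm
    _ = (a + z) + z' := by rw [ann_add_comm hz a]
    _ = a + (z + z') := add_assoc _ _ _

lemma ann_inv_eq_neg {z : B} (hz : z ∈ annSet B) : z⁻¹ = -z := by
  have h : z + z⁻¹ = 0 := by
    rw [← ann_mul_add hz, mul_inv_cancel, one_eq_zero']
  exact eq_neg_of_add_eq_zero_right h

lemma ann_inv_mul {z : B} (hz : z ∈ annSet B) (a : B) : z⁻¹ * a = -z + a := by
  have h : z * (z⁻¹ * a) = a := by rw [← mul_assoc, mul_inv_cancel, one_mul]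
  rw [ann_mul_add hz] at h
  exact eq_neg_add_iff_add_eq.mpr h

lemma ann_neg {z : B} (hz : z ∈ annSet B) : -z ∈ annSet B := by
  intro a
  refine ⟨?_, ?_, ?_⟩
  · rw [← ann_inv_eq_neg hz]
    have l : z * (z⁻¹ * a) = a := by rw [← mul_assoc, mul_inv_cancel, one_mul]
    have r : z * (a * z⁻¹) = a := by
      rw [← mul_assoc, ann_mul_comm hz a, mul_assoc, mul_inv_cancel,
        one_eq_zero', mul_zero_right]
    exact mul_left_cancel (l.trans r.symm)
  · have e := ann_inv_mul hz a
    rw [ann_inv_eq_neg hz] at e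
    exact e
  · have h : z + (a + -z) = a := by
      rw [← add_assoc, ann_add_comm hz a, add_assoc, add_neg_cancel, add_zero]
    exact (eq_neg_add_iff_add_eq.mpr h).symm

lemma ann_mul_mem {z z' : B} (hz : z ∈ annSet B) (hz' : z' ∈ annSet B) :
    z * z' ∈ annSet B := by
  rw [ann_mul_add hz]; exact ann_add hz hz'

lemma ann_inv_mem {z : B} (hz : z ∈ annSet B) : z⁻¹ ∈ annSet B := by
  rw [ann_inv_eq_neg hz]; exact ann_neg hz

lemma ann_nsmul {z : B} (hz : z ∈ annSet B) (k : ℕ) : k • z ∈ annSet B := by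
  induction k with
  | zero => rw [zero_smul]; exact ann_zero
  | succ k ih => rw [succ_nsmul]; exact ann_add ih hz

lemma annSeries_one : annSeries B 1 = annSet B := by
  ext x
  show (∀ a : B, x * a - a * x ∈ annSeries B 0 ∧ x * a - (x + a) ∈ annSeries B 0 ∧
      (x + a) - (a + x) ∈ annSeries B 0) ↔ _
  simp only [annSeries, Set.mem_singleton_iff, sub_eq_zero]
  rfl

/-! ### The three obstruction maps of a 2-annihilator element -/

/-- `θ_x(a) = λ_x(a) - a`. -/
def th (x a : B) : B := lam x a - a
/-- `χ_x(a) = x + a - x - a`. -/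
def ch (x a : B) : B := x + a - x - a
/-- `ζ_x(a) = λ_a(x) - x`. -/
def ze (x a : B) : B := lam a x - x

/-- `x` is "2-annihilator": all three obstruction maps take values in the
annihilator. -/
def A2 (x : B) : Prop :=
  ∀ a : B, th x a ∈ annSet B ∧ ch x a ∈ annSet B ∧ ze x a ∈ annSet B

lemma lam_eq_th (x a : B) : lam x a = th x a + a := by
  unfold th; rw [sub_add_cancel]

lemma lam_eq_ze (x a : B) : lam a x = ze x a + x := by
  unfold ze; rw [sub_add_cancel]

lemma ann_conj {z : B} (hz : z ∈ annSet B) (b : B) : b + z - b = z := by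
  rw [← ann_add_comm hz b, add_sub_cancel_right]

lemma ann_conj' {z : B} (hz : z ∈ annSet B) (b : B) : -b + z + b = z := by
  rw [add_assoc, ann_add_comm hz b, neg_add_cancel_left]

lemma lam_ann_add {z : B} (hz : z ∈ annSet B) (w c : B) :
    lam (z + w) c = lam w c := by
  rw [← ann_mul_add hz w, lam_mul, lam_of_ann hz]

/-- `t₂` membership gives `θ` membership. -/
lemma th_mem_of {x a : B} (h : x * a - (x + a) ∈ annSet B) :
    th x a ∈ annSet B := by
  have t2eq : x * a - (x + a) = x + th x a - x := by
    rw [mul_eq_add_lam, lam_eq_th]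
    simp [sub_eq_add_neg, add_assoc]
  rw [t2eq] at h
  have id1 : -x + (x + th x a - x) + x = th x a := by
    simp [sub_eq_add_neg, add_assoc]
  have e : x + th x a - x = th x a := (id1.symm.trans (ann_conj' h x)).symm
  exact e ▸ h

lemma ch_eq_t3 (x a : B) : (x + a) - (a + x) = ch x a := by
  unfold ch
  simp [sub_eq_add_neg, add_assoc]

/-- From the three raw conditions, `ζ` membership. -/
lemma ze_mem_of {x a : B} (h1 : x * a - a * x ∈ annSet B)
    (h2 : x * a - (x + a) ∈ annSet B) (h3 : (x + a) - (a + x) ∈ annSet B) :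
    ze x a ∈ annSet B := by
  have hv : a * x = -(x * a - a * x) + (x * a) := by
    rw [neg_sub, sub_add_cancel]
  have hu : x * a = (x * a - (x + a)) + (x + a) := by rw [sub_add_cancel]
  have hw : (x + a) = ((x + a) - (a + x)) + (a + x) := by rw [sub_add_cancel]
  set t1 := x * a - a * x
  set t2 := x * a - (x + a)
  set t3 := (x + a) - (a + x)
  have e1 : ze x a = -a + (a * x) + -x := by
    unfold ze lam; rw [sub_eq_add_neg]
  rw [hv, hu, hw] at e1
  -- e1 : ze x a = -a + (-t1 + (t2 + (t3 + (a + x)))) + -x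
  have e2 : -a + (-t1 + (t2 + (t3 + (a + x)))) + -x
      = -a + (-t1 + (t2 + (t3 + a))) := by
    rw [add_assoc, add_assoc, add_assoc, add_assoc, add_assoc,
      add_neg_cancel, add_zero]
  have e3 : t3 + a = a + t3 := ann_add_comm h3 a
  have e4 : t2 + (a + t3) = a + (t2 + t3) := by
    rw [← add_assoc, ann_add_comm h2 a, add_assoc]
  have e5 : -t1 + (a + (t2 + t3)) = a + (-t1 + (t2 + t3)) := by
    rw [← add_assoc, ann_add_comm (ann_neg h1) a, add_assoc]
  rw [e1, e2, e3, e4, e5, neg_add_cancel_left]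
  exact ann_add (ann_neg h1) (ann_add h2 h3)

lemma mem_two {x : B} (hx : x ∈ annSeries B 2) (a : B) :
    x * a - a * x ∈ annSet B ∧ x * a - (x + a) ∈ annSet B ∧
      (x + a) - (a + x) ∈ annSet B := by
  have h : x ∈ {y : B | ∀ a : B, y * a - a * y ∈ annSeries B 1 ∧
      y * a - (y + a) ∈ annSeries B 1 ∧ (y + a) - (a + y) ∈ annSeries B 1} := hx
  rw [annSeries_one] at h
  exact h a

/-- Elements of `annSeries B 2` are 2-annihilator elements. -/
lemma A2_of_mem_two {x : B} (hx : x ∈ annSeries B 2) : A2 x := by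
  intro a
  obtain ⟨h1, h2, h3⟩ := mem_two hx a
  refine ⟨th_mem_of h2, ?_, ze_mem_of h1 h2 h3⟩
  rw [← ch_eq_t3]; exact h3

/-! ### Additivity of the obstruction maps -/

lemma mul_A2 {x : B} (hx : A2 x) (a : B) : x * a = th x a + (x + a) := by
  rw [mul_eq_add_lam, lam_eq_th, ← add_assoc, ← ann_add_comm ((hx a).1) x,
    add_assoc]

lemma a_mul_A2 {x : B} (hx : A2 x) (a : B) : a * x = ze x a + (a + x) := by
  rw [mul_eq_add_lam, lam_eq_ze, ← add_assoc, ← ann_add_comm ((hx a).2.2) a,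
    add_assoc]

lemma xa_sum (x a : B) : x + a = ch x a + (a + x) := by
  simp [ch, sub_eq_add_neg, add_assoc]

lemma ch_swap (x a : B) : ch a x = -(ch x a) := by
  simp [ch, sub_eq_add_neg, neg_add_rev, add_assoc]

lemma lam_comm {x : B} (hx : A2 x) (a c : B) :
    lam a (lam x c) = lam x (lam a c) := by
  have hm : ch a x ∈ annSet B := by
    rw [ch_swap]; exact ann_neg (hx a).2.1
  rw [← lam_mul, ← lam_mul, a_mul_A2 hx, mul_A2 hx,
    lam_ann_add ((hx a).2.2), lam_ann_add ((hx a).1), xa_sum a x,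
    lam_ann_add hm]

lemma th_mul {y : B} (hy : A2 y) (x a : B) :
    th (x * y) a = th x a + th y a := by
  show lam (x * y) a - a = _
  rw [lam_mul, lam_eq_th y a, lam_add, lam_ann ((hy a).1), lam_eq_th x a,
    ← add_assoc, add_sub_cancel_right, ann_add_comm ((hy a).1)]

lemma ch_transport (c y b : B) : lam c (ch y b) = ch (lam c y) (lam c b) := by
  simp [ch, sub_eq_add_neg, lam_add, lam_neg]

lemma ch_shift' {z : B} (hz : z ∈ annSet B) (y w : B) :
    ch (z + y) w = ch y w := by
  have key : ∀ Q : B, z + (Q + -z) = Q := fun Q => by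
    rw [← add_assoc, ann_add_comm hz Q, add_assoc, add_neg_cancel, add_zero]
  show (z + y) + w - (z + y) - w = ch y w
  have e1 : (z + y) + w - (z + y) - w = z + ((y + w + -y) + -z) + -w := by
    simp [sub_eq_add_neg, add_assoc]
  rw [e1, key (y + w + -y)]
  simp [ch, sub_eq_add_neg]

lemma ch_arg {y : B} (hy : A2 y) (c b : B) : ch y (lam c b) = ch y b := by
  have t := ch_transport c y b
  rw [lam_ann ((hy b).2.1)] at t
  rw [lam_eq_ze] at t
  rw [ch_shift' ((hy c).2.2)] at t
  exact t.symm

lemma ch_lam_subscript {y : B} (hy : A2 y) (x a : B) :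
    ch (lam x y) a = ch y a := by
  have h1 : lam x (ch y (lam x⁻¹ a)) = ch (lam x y) a := by
    rw [ch_transport, lam_lam_inv]
  have h2 : lam x (ch y (lam x⁻¹ a)) = ch y (lam x⁻¹ a) :=
    lam_ann ((hy _).2.1) x
  rw [← h1, h2, ch_arg hy]

lemma ch_plus_arg (v a : B) : v + a + -v = ch v a + a := by
  simp [ch, sub_eq_add_neg, add_assoc]

lemma ch_mul {y : B} (hy : A2 y) (x a : B) :
    ch (x * y) a = ch x a + ch y a := by
  have hv : ch (lam x y) a = ch y a := ch_lam_subscript hy x a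
  show (x * y) + a - (x * y) - a = _
  rw [mul_eq_add_lam x y]
  set v := lam x y with hvdef
  have e1 : x + v + a - (x + v) - a = x + (v + a + -v) + -x + -a := by
    simp [sub_eq_add_neg, add_assoc]
  rw [e1, ch_plus_arg v a, hv, ← add_assoc x (ch y a) a,
    ← ann_add_comm ((hy a).2.1) x, add_assoc (ch y a) x a,
    add_assoc (ch y a) (x + a) (-x), add_assoc (ch y a) (x + a + -x) (-a)]
  have e2 : x + a + -x + -a = ch x a := by simp [ch, sub_eq_add_neg]
  rw [e2, ann_add_comm ((hy a).2.1)]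

lemma ze_mul {x y : B} (hx : A2 x) (hy : A2 y) (a : B) :
    ze (x * y) a = ze x a + ze y a := by
  have key : lam a (x * y) = (ze x a + ze y a) + (x * y) := by
    rw [mul_eq_add_lam x y, lam_add, lam_comm hx, lam_eq_ze x a,
      lam_eq_ze y a, lam_add, lam_ann ((hy a).2.2)]
    -- (ze x a + x) + (ze y a + lam x y)
    rw [add_assoc (ze x a) x (ze y a + lam x y), ← add_assoc x (ze y a) (lam x y),
      ← ann_add_comm ((hy a).2.2) x, add_assoc (ze y a) x (lam x y),
      ← add_assoc (ze x a) (ze y a) (x + lam x y)]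
  show lam a (x * y) - (x * y) = _
  rw [key, add_sub_cancel_right]

/-! ### Powers of 2-annihilator elements -/

lemma A2_mul {x y : B} (hx : A2 x) (hy : A2 y) : A2 (x * y) := fun a =>
  ⟨by rw [th_mul hy]; exact ann_add (hx a).1 (hy a).1,
   by rw [ch_mul hy]; exact ann_add (hx a).2.1 (hy a).2.1,
   by rw [ze_mul hx hy]; exact ann_add (hx a).2.2 (hy a).2.2⟩

lemma th_one (a : B) : th (1 : B) a = 0 := by
  show lam 1 a - a = 0
  rw [lam_one, sub_self]

lemma ch_one (a : B) : ch (1 : B) a = 0 := by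
  show (1 : B) + a - 1 - a = 0
  rw [one_eq_zero', zero_add, sub_zero, sub_self]

lemma ze_one (a : B) : ze (1 : B) a = 0 := by
  show lam a (1 : B) - 1 = 0
  rw [one_eq_zero', lam_zero, sub_self]

lemma A2_one : A2 (1 : B) := fun a => by
  rw [th_one, ch_one, ze_one]; exact ⟨ann_zero, ann_zero, ann_zero⟩

lemma A2_pow {x : B} (hx : A2 x) (k : ℕ) :
    A2 (x ^ k) ∧ ∀ a : B, th (x ^ k) a = k • th x a ∧
      ch (x ^ k) a = k • ch x a ∧ ze (x ^ k) a = k • ze x a := by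
  induction k with
  | zero =>
    rw [pow_zero]
    exact ⟨A2_one, fun a => by simp [th_one, ch_one, ze_one]⟩
  | succ k ih =>
    rw [pow_succ]
    refine ⟨A2_mul ih.1 hx, fun a => ?_⟩
    obtain ⟨e1, e2, e3⟩ := ih.2 a
    refine ⟨?_, ?_, ?_⟩
    · rw [th_mul hx, e1, succ_nsmul]
    · rw [ch_mul hx, e2, succ_nsmul]
    · rw [ze_mul ih.1 hx, e3, succ_nsmul]

lemma mem_ann_of_triv {x : B}
    (h : ∀ a : B, th x a = 0 ∧ ch x a = 0 ∧ ze x a = 0) : x ∈ annSet B := by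
  intro a
  obtain ⟨h1, h2, h3⟩ := h a
  have e1 : lam x a = a := by
    have := sub_eq_zero.mp h1; exact this
  have e2 : lam a x = x := sub_eq_zero.mp h3
  have e3 : x + a = a + x := by
    have h2' : x + a - x = a := by
      have := sub_eq_zero.mp h2; exact this
    rw [sub_eq_iff_eq_add] at h2'
    exact h2'
  have mulxa : x * a = x + a := by rw [mul_eq_add_lam, e1]
  have mulax : a * x = a + x := by rw [mul_eq_add_lam, e2]
  exact ⟨by rw [mulxa, mulax, e3], mulxa, e3⟩

lemma A2_pow_ann {x : B} (hx : A2 x) {e : ℕ}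
    (he : ∀ z ∈ annSet B, e • z = 0) : x ^ e ∈ annSet B := by
  apply mem_ann_of_triv
  intro a
  obtain ⟨e1, e2, e3⟩ := (A2_pow hx e).2 a
  exact ⟨by rw [e1]; exact he _ (hx a).1,
    by rw [e2]; exact he _ (hx a).2.1,
    by rw [e3]; exact he _ (hx a).2.2⟩

/-! ### Quotient by the annihilator -/

lemma wd_add {x x' y y' : B} (hx : -x + x' ∈ annSet B)
    (hy : -y + y' ∈ annSet B) : -(x + y) + (x' + y') ∈ annSet B := by
  have e : -(x + y) + (x' + y') = (-y + y') + (-x + x') := by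
    rw [neg_add_rev, add_assoc (-y) (-x) (x' + y'), ← add_assoc (-x) x' y',
      ann_add_comm hx y', ← add_assoc]
  rw [e]; exact ann_add hy hx

lemma wd_neg {x x' : B} (hx : -x + x' ∈ annSet B) :
    -(-x) + -x' ∈ annSet B := by
  have hw : -(-x + x') ∈ annSet B := ann_neg hx
  have e : -(-x) + -x' = x + -(-x + x') - x := by
    simp [neg_add_rev, sub_eq_add_neg, add_assoc]
  rw [e, ann_conj hw]
  exact hw

lemma wd_mul {x x' y y' : B} (hx : -x + x' ∈ annSet B)
    (hy : -y + y' ∈ annSet B) : -(x * y) + (x' * y') ∈ annSet B := by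
  have hzz : (-x + x') * (-y + y') ∈ annSet B := ann_mul_mem hx hy
  have ex : x * (-x + x') = x' := by rw [ann_mul_right hx, add_neg_cancel_left]
  have ey : y * (-y + y') = y' := by rw [ann_mul_right hy, add_neg_cancel_left]
  have key : (x * y) * ((-x + x') * (-y + y')) = x' * y' := by
    rw [← mul_assoc, mul_assoc x y (-x + x'), ← ann_mul_comm hx y,
      ← mul_assoc x (-x + x') y, ex, mul_assoc, ey]
  rw [← key, ann_mul_right hzz, neg_add_cancel_left]
  exact hzz

lemma wd_inv {x x' : B} (hx : -x + x' ∈ annSet B) :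
    -(x⁻¹) + x'⁻¹ ∈ annSet B := by
  set z := -x + x' with hzdef
  have ex : x * z = x' := by rw [hzdef, ann_mul_right hx, add_neg_cancel_left]
  have hz : z⁻¹ ∈ annSet B := ann_inv_mem hx
  have e : x'⁻¹ = z⁻¹ + x⁻¹ := by
    rw [← ex, mul_inv_rev, ann_mul_add hz]
  rw [e, ann_add_comm hz x⁻¹, neg_add_cancel_left]
  exact hz

variable (B) in
/-- The congruence mod the annihilator. -/
def annSetoid : Setoid B where
  r x y := -x + y ∈ annSet B
  iseqv := by
    refine ⟨fun x => by rw [neg_add_cancel]; exact ann_zero, fun {x y} h => ?_,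
      fun {x y z} h1 h2 => ?_⟩
    · have := ann_neg h
      rwa [neg_add_rev, neg_neg] at this
    · have := ann_add h1 h2
      rwa [add_assoc, add_neg_cancel_left] at this

variable (B) in
/-- The quotient skew brace `B / Ann(B)`. -/
def QB := Quotient (annSetoid B)

variable (B) in
/-- Quotient map. -/
def qmk : B → QB B := Quotient.mk (annSetoid B)

instance : Zero (QB B) := ⟨qmk B 0⟩
instance : One (QB B) := ⟨qmk B 1⟩
instance : Add (QB B) :=
  ⟨Quotient.map₂ (· + ·) (fun _ _ h1 _ _ h2 => wd_add h1 h2)⟩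
instance : Neg (QB B) := ⟨Quotient.map (-·) (fun _ _ h => wd_neg h)⟩
instance : Mul (QB B) :=
  ⟨Quotient.map₂ (· * ·) (fun _ _ h1 _ _ h2 => wd_mul h1 h2)⟩
instance : Inv (QB B) := ⟨Quotient.map (·⁻¹) (fun _ _ h => wd_inv h)⟩

instance : AddGroup (QB B) :=
  AddGroup.ofLeftAxioms
    (fun a b c => by
      induction a using Quotient.ind with | _ x =>
      induction b using Quotient.ind with | _ y =>
      induction c using Quotient.ind with | _ z =>
      exact congrArg (Quotient.mk _) (add_assoc x y z))
    (fun a => by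
      induction a using Quotient.ind with | _ x =>
      exact congrArg (Quotient.mk _) (zero_add x))
    (fun a => by
      induction a using Quotient.ind with | _ x =>
      exact congrArg (Quotient.mk _) (neg_add_cancel x))

instance : Group (QB B) :=
  Group.ofLeftAxioms
    (fun a b c => by
      induction a using Quotient.ind with | _ x =>
      induction b using Quotient.ind with | _ y =>
      induction c using Quotient.ind with | _ z =>
      exact congrArg (Quotient.mk _) (mul_assoc x y z))
    (fun a => by
      induction a using Quotient.ind with | _ x =>
      exact congrArg (Quotient.mk _) (one_mul x))
    (fun a => by
      induction a using Quotient.ind with | _ x =>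
      exact congrArg (Quotient.mk _) (inv_mul_cancel x))

instance : SkewBrace (QB B) :=
  { (inferInstance : AddGroup (QB B)), (inferInstance : Group (QB B)) with
    circ_add := fun a b c => by
      induction a using Quotient.ind with | _ x =>
      induction b using Quotient.ind with | _ y =>
      induction c using Quotient.ind with | _ z =>
      erw [sub_eq_add_neg]
      show Quotient.mk _ (x * (y + z)) = Quotient.mk _ (x * y + -x + x * z)
      exact congrArg (Quotient.mk _) (by rw [circ_add, sub_eq_add_neg]) }

lemma qmk_add (x y : B) : qmk B (x + y) = qmk B x + qmk B y := rfl
lemma qmk_mul (x y : B) : qmk B (x * y) = qmk B x * qmk B y := rfl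
lemma qmk_neg (x : B) : qmk B (-x) = -(qmk B x) := rfl
lemma qmk_inv (x : B) : qmk B x⁻¹ = (qmk B x)⁻¹ := rfl
lemma qmk_zero : qmk B 0 = (0 : QB B) := rfl
lemma qmk_one : qmk B 1 = (1 : QB B) := rfl

lemma qmk_sub (x y : B) : qmk B (x - y) = qmk B x - qmk B y := by
  rw [sub_eq_add_neg, sub_eq_add_neg, qmk_add, qmk_neg]

lemma qmk_surjective : Function.Surjective (qmk B) := by
  intro q
  induction q using Quotient.ind with | _ x => exact ⟨x, rfl⟩

lemma qmk_eq_iff {x y : B} : qmk B x = qmk B y ↔ -x + y ∈ annSet B := by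
  constructor
  · exact fun h => Quotient.exact h
  · exact fun h => Quotient.sound h

lemma qmk_eq_zero_iff {x : B} : qmk B x = 0 ↔ x ∈ annSet B := by
  show qmk B x = qmk B 0 ↔ _
  rw [qmk_eq_iff]
  constructor
  · intro h
    have := ann_neg h
    rwa [neg_add_rev, neg_zero, zero_add, neg_neg] at this
  · intro h
    rw [add_zero]
    exact ann_neg h

lemma qmk_pow (x : B) (k : ℕ) : qmk B (x ^ k) = (qmk B x) ^ k := by
  induction k with
  | zero => rw [pow_zero, pow_zero, qmk_one]
  | succ k ih => rw [pow_succ, pow_succ, qmk_mul, ih]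

/-! ### Transfer along the quotient map -/

lemma annSeries_succ_mem {C : Type*} [SkewBrace C] (k : ℕ) (x : C) :
    x ∈ annSeries C (k + 1) ↔ ∀ a : C, x * a - a * x ∈ annSeries C k ∧
      x * a - (x + a) ∈ annSeries C k ∧ (x + a) - (a + x) ∈ annSeries C k :=
  Iff.rfl

lemma annSeries_preimage (k : ℕ) :
    annSeries B (k + 1) = qmk B ⁻¹' (annSeries (QB B) k) := by
  induction k with
  | zero =>
    ext x
    rw [annSeries_one]
    show _ ↔ qmk B x ∈ ({0} : Set (QB B))
    rw [Set.mem_singleton_iff, qmk_eq_zero_iff]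
  | succ k ih =>
    ext x
    rw [Set.mem_preimage, annSeries_succ_mem, annSeries_succ_mem]
    constructor
    · intro h q
      induction q using Quotient.ind with | _ a =>
      obtain ⟨h1, h2, h3⟩ := h a
      rw [ih, Set.mem_preimage] at h1 h2 h3
      rw [qmk_sub, qmk_mul, qmk_mul] at h1
      rw [qmk_sub, qmk_mul, qmk_add] at h2
      rw [qmk_sub, qmk_add, qmk_add] at h3
      exact ⟨h1, h2, h3⟩
    · intro h a
      obtain ⟨h1, h2, h3⟩ := h (qmk B a)
      rw [ih]
      refine ⟨?_, ?_, ?_⟩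
      · rw [Set.mem_preimage, qmk_sub, qmk_mul, qmk_mul]; exact h1
      · rw [Set.mem_preimage, qmk_sub, qmk_mul, qmk_add]; exact h2
      · rw [Set.mem_preimage, qmk_sub, qmk_add, qmk_add]; exact h3

lemma sbfg_qb (hfg : SBFinitelyGenerated B) : SBFinitelyGenerated (QB B) := by
  obtain ⟨S, hSfin, hS⟩ := hfg
  refine ⟨qmk B '' S, hSfin.image _, fun T hT hsub => ?_⟩
  have hpre : IsSubSkewBrace (qmk B ⁻¹' T) := by
    obtain ⟨h0, hadd, hneg, hmul, hinv⟩ := hT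
    refine ⟨?_, ?_, ?_, ?_, ?_⟩
    · show qmk B 0 ∈ T; rw [qmk_zero]; exact h0
    · intro a ha b hb; show qmk B (a + b) ∈ T; rw [qmk_add]; exact hadd _ ha _ hb
    · intro a ha; show qmk B (-a) ∈ T; rw [qmk_neg]; exact hneg _ ha
    · intro a ha b hb; show qmk B (a * b) ∈ T; rw [qmk_mul]; exact hmul _ ha _ hb
    · intro a ha; show qmk B a⁻¹ ∈ T; rw [qmk_inv]; exact hinv _ ha
  have hSsub : S ⊆ qmk B ⁻¹' T := fun s hs => hsub ⟨s, hs, rfl⟩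
  have huniv := hS _ hpre hSsub
  ext q
  simp only [Set.mem_univ, iff_true]
  obtain ⟨x, rfl⟩ := qmk_surjective q
  have hx : x ∈ qmk B ⁻¹' T := by rw [huniv]; trivial
  exact hx

lemma annSet_qb_eq : annSet (QB B) = qmk B '' (annSeries B 2) := by
  have h : annSeries B 2 = qmk B ⁻¹' (annSet (QB B)) := by
    have h' := annSeries_preimage (B := B) 1
    rwa [annSeries_one] at h'
  rw [h, Set.image_preimage_eq _ qmk_surjective]

lemma ann_pow_eq_nsmul {C : Type*} [SkewBrace C] {w : C} (hw : w ∈ annSet C)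
    (k : ℕ) : w ^ k = k • w := by
  induction k with
  | zero => rw [pow_zero, zero_smul, one_eq_zero']
  | succ k ih => rw [pow_succ, ih, succ_nsmul, ann_mul_add (ann_nsmul hw k)]

lemma ann_exp_qb {e : ℕ} (he : ∀ z ∈ annSet B, e • z = 0) :
    ∀ w ∈ annSet (QB B), e • w = 0 := by
  intro w hw
  rw [annSet_qb_eq] at hw
  obtain ⟨x, hx2, rfl⟩ := hw
  have hA2 : A2 x := A2_of_mem_two hx2
  have hpow : x ^ e ∈ annSet B := A2_pow_ann hA2 he
  have h1 : (qmk B x) ^ e = 0 := by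
    rw [← qmk_pow, qmk_eq_zero_iff]; exact hpow
  rw [← ann_pow_eq_nsmul (show qmk B x ∈ annSet (QB B) by
    rw [annSet_qb_eq]; exact ⟨x, hx2, rfl⟩) e]
  exact h1

lemma annSeries_mono {C : Type*} [SkewBrace C] :
    ∀ k, annSeries C k ⊆ annSeries C (k + 1) := by
  intro k
  induction k with
  | zero =>
    intro x hx
    rw [Set.mem_singleton_iff.mp hx]
    intro a
    rw [zero_mul_left, mul_zero_right, zero_add, add_zero, sub_self]
    exact ⟨rfl, rfl, rfl⟩
  | succ k ih =>
    intro x hx a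
    obtain ⟨h1, h2, h3⟩ := hx a
    exact ⟨ih h1, ih h2, ih h3⟩

lemma series_univ_qb {n : ℕ} (h : annSeries B (n + 1) = Set.univ) :
    annSeries (QB B) n = Set.univ := by
  ext q
  simp only [Set.mem_univ, iff_true]
  obtain ⟨x, rfl⟩ := qmk_surjective q
  have hx : x ∈ annSeries B (n + 1) := by rw [h]; trivial
  rw [annSeries_preimage n] at hx
  exact hx

lemma finite_of_qb (h1 : Finite (QB B)) (h2 : (annSet B).Finite) : Finite B := by
  haveI := h2.to_subtype
  have hf : Function.Injective (fun b : B =>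
      ((qmk B b, ⟨-(Quotient.out (qmk B b)) + b, by
        rw [← qmk_eq_iff]
        exact Quotient.out_eq (qmk B b)⟩) : QB B × ↥(annSet B))) := by
    intro b b' hbb
    have e1 : qmk B b = qmk B b' := congrArg Prod.fst hbb
    have e2 : -(Quotient.out (qmk B b)) + b = -(Quotient.out (qmk B b')) + b' := by
      have := congrArg Prod.snd hbb
      exact Subtype.ext_iff.mp this
    rw [e1] at e2
    exact add_left_cancel e2
  exact Finite.of_injective _ hf

/-! ### Central Schreier: the annihilator is finitely generated -/

lemma ann_fg_of_finite_qb (h1 : Finite (QB B)) (hfg : SBFinitelyGenerated B) :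
    ∃ D : Set B, D.Finite ∧ D ⊆ annSet B ∧
      annSet B ⊆ (AddSubgroup.closure D : Set B) := by
  classical
  haveI : Finite (Quotient (annSetoid B)) := h1
  obtain ⟨S, hSfin, hS⟩ := hfg
  set rep : B → B := fun b => Quotient.out (qmk B b) with hrepdef
  set nu : B → B := fun b => b - rep b with hnudef
  have hrep_q : ∀ b : B, qmk B (rep b) = qmk B b := fun b => Quotient.out_eq _
  have hnuZ : ∀ b : B, nu b ∈ annSet B := fun b => by
    rw [← qmk_eq_zero_iff, hnudef]
    show qmk B (b - rep b) = 0
    rw [qmk_sub, hrep_q, sub_self]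
  have decomp : ∀ b : B, nu b + rep b = b := fun b => sub_add_cancel b (rep b)
  set T : Set B := Set.range (Quotient.out : QB B → B) with hTdef
  have hTfin : T.Finite := Set.finite_range _
  have hrepT : ∀ b : B, rep b ∈ T := fun b => ⟨qmk B b, rfl⟩
  set E : Set B := Set.image2 (· + ·) T T ∪ Set.image2 (· * ·) T T ∪
      ((fun t => -t) '' T) ∪ ((fun t => t⁻¹) '' T) ∪ S with hEdef
  have hEfin : E.Finite :=
    ((((hTfin.image2 _ hTfin).union (hTfin.image2 _ hTfin)).union
      (hTfin.image _)).union (hTfin.image _)).union hSfin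
  set D : Set B := (nu '' E) ∪ {Quotient.out (0 : QB B)} with hDdef
  have hDfin : D.Finite := (hEfin.image _).union (Set.finite_singleton _)
  have hout0 : Quotient.out (0 : QB B) ∈ annSet B := by
    rw [← qmk_eq_zero_iff]
    exact Quotient.out_eq _
  have hDZ : D ⊆ annSet B := by
    rintro d (⟨b, _, rfl⟩ | hd)
    · exact hnuZ b
    · rw [Set.mem_singleton_iff.mp hd]; exact hout0
  refine ⟨D, hDfin, hDZ, ?_⟩
  set A : AddSubgroup B := AddSubgroup.closure D with hAdef
  have hAZ : (A : Set B) ⊆ annSet B := by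
    rw [hAdef]
    rw [show annSet B = ((⟨⟨⟨annSet B, fun h1 h2 => ann_add h1 h2⟩,
      ann_zero⟩, fun h => ann_neg h⟩ : AddSubgroup B) : Set B) from rfl]
    exact AddSubgroup.closure_le _ |>.mpr hDZ
  -- helper: ν(ζ + t) = ζ + ν t для ζ ∈ A
  have hrep_eq : ∀ u v : B, qmk B u = qmk B v → rep u = rep v := fun u v h => by
    rw [hrepdef]; show Quotient.out (qmk B u) = Quotient.out (qmk B v); rw [h]
  have helper : ∀ ζ t : B, ζ ∈ (A : Set B) → nu t ∈ (A : Set B) →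
      nu (ζ + t) ∈ (A : Set B) := by
    intro ζ t hζA hνt
    have hζZ : ζ ∈ annSet B := hAZ hζA
    have hq : qmk B (ζ + t) = qmk B t := by
      rw [qmk_add, qmk_eq_zero_iff.mpr hζZ, zero_add]
    have e : nu (ζ + t) = ζ + nu t := by
      show (ζ + t) - rep (ζ + t) = ζ + (t - rep t)
      rw [hrep_eq _ _ hq, sub_eq_add_neg, sub_eq_add_neg, add_assoc]
    rw [e]
    exact A.add_mem hζA hνt
  -- the subset U
  set U : Set B := {b : B | nu b ∈ (A : Set B)} with hUdef
  have hDA : D ⊆ (A : Set B) := AddSubgroup.subset_closure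
  have hUsub : IsSubSkewBrace U := by
    refine ⟨?_, ?_, ?_, ?_, ?_⟩
    · -- 0 ∈ U
      show nu 0 ∈ (A : Set B)
      have : nu 0 = -(Quotient.out (0 : QB B)) := by
        show (0 : B) - rep 0 = _
        rw [zero_sub]
        rfl
      rw [this]
      exact A.neg_mem (hDA (Or.inr rfl))
    · -- add
      intro a ha b hb
      show nu (a + b) ∈ (A : Set B)
      have hνa := hnuZ a
      have hνb := hnuZ b
      have e : a + b = (nu a + nu b) + (rep a + rep b) := by
        conv_lhs => rw [← decomp a, ← decomp b]
        rw [add_assoc (nu a) (rep a) (nu b + rep b),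
          ← add_assoc (rep a) (nu b) (rep b),
          ← ann_add_comm hνb (rep a), add_assoc (nu b) (rep a) (rep b),
          ← add_assoc]
      rw [e]
      refine helper _ _ (A.add_mem ha hb) (hDA (Or.inl ⟨rep a + rep b, ?_, rfl⟩))
      exact Or.inl (Or.inl (Or.inl (Or.inl
        (Set.mem_image2_of_mem (hrepT a) (hrepT b)))))
    · -- neg
      intro a ha
      show nu (-a) ∈ (A : Set B)
      have hνa := hnuZ a
      have e : -a = -(nu a) + (-(rep a)) := by
        conv_lhs => rw [← decomp a]
        rw [neg_add_rev, ← ann_add_comm (ann_neg hνa) (-(rep a))]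
      rw [e]
      refine helper _ _ (A.neg_mem ha) (hDA (Or.inl ⟨-(rep a), ?_, rfl⟩))
      exact Or.inl (Or.inl (Or.inr ⟨rep a, hrepT a, rfl⟩))
    · -- mul
      intro a ha b hb
      show nu (a * b) ∈ (A : Set B)
      have hνa := hnuZ a
      have hνb := hnuZ b
      have ea : nu a * rep a = a := by rw [ann_mul_add hνa, decomp]
      have eb : nu b * rep b = b := by rw [ann_mul_add hνb, decomp]
      have e : a * b = (nu a + nu b) + (rep a * rep b) := by
        conv_lhs => rw [← ea, ← eb]
        rw [mul_assoc (nu a) (rep a) (nu b * rep b),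
          ← mul_assoc (rep a) (nu b) (rep b),
          ← ann_mul_comm hνb (rep a), mul_assoc (nu b) (rep a) (rep b),
          ← mul_assoc (nu a) (nu b) (rep a * rep b),
          ann_mul_add hνa (nu b), ann_mul_add (ann_add hνa hνb) (rep a * rep b)]
      rw [e]
      refine helper _ _ (A.add_mem ha hb) (hDA (Or.inl ⟨rep a * rep b, ?_, rfl⟩))
      exact Or.inl (Or.inl (Or.inl (Or.inr
        (Set.mem_image2_of_mem (hrepT a) (hrepT b)))))
    · -- inv
      intro a ha
      show nu a⁻¹ ∈ (A : Set B)
      have hνa := hnuZ a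
      have ea : nu a * rep a = a := by rw [ann_mul_add hνa, decomp]
      have e : a⁻¹ = -(nu a) + (rep a)⁻¹ := by
        conv_lhs => rw [← ea]
        rw [mul_inv_rev, ← ann_mul_comm (ann_inv_mem hνa) ((rep a)⁻¹),
          ann_mul_add (ann_inv_mem hνa), ann_inv_eq_neg hνa]
      rw [e]
      refine helper _ _ (A.neg_mem ha) (hDA (Or.inl ⟨(rep a)⁻¹, ?_, rfl⟩))
      exact Or.inl (Or.inr ⟨rep a, hrepT a, rfl⟩)
  have hSU : S ⊆ U := by
    intro s hs
    show nu s ∈ (A : Set B)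
    exact hDA (Or.inl ⟨s, Or.inr hs, rfl⟩)
  have hUuniv := hS U hUsub hSU
  -- conclude
  intro z hz
  have hzU : z ∈ U := by rw [hUuniv]; trivial
  have hrepz : rep z = Quotient.out (0 : QB B) := by
    rw [hrepdef]
    show Quotient.out (qmk B z) = _
    rw [qmk_eq_zero_iff.mpr hz]
  have : z = nu z + Quotient.out (0 : QB B) := by
    rw [← hrepz]; exact (decomp z).symm
  rw [this]
  exact A.add_mem hzU (hDA (Or.inr rfl))

/-! ### Finiteness of a finitely generated torsion central subgroup -/

lemma nsmul_mod {d : B} {e : ℕ} (hed : e • d = 0) (k : ℕ) :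
    k • d = (k % e) • d := by
  conv_lhs => rw [← Nat.div_add_mod k e]
  rw [add_nsmul, mul_nsmul, hed, smul_zero, zero_add]

lemma closure_finite_of_torsion {e : ℕ} (hepos : 0 < e)
    (he : ∀ z ∈ annSet B, e • z = 0) :
    ∀ F : Finset B, ↑F ⊆ annSet B →
      ((AddSubgroup.closure (F : Set B) : Set B)).Finite := by
  classical
  intro F
  induction F using Finset.induction_on with
  | empty =>
    intro _
    rw [Finset.coe_empty, AddSubgroup.closure_empty]
    show Set.Finite ((⊥ : AddSubgroup B) : Set B)
    rw [AddSubgroup.coe_bot]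
    exact Set.finite_singleton 0
  | @insert d F hdF ih =>
    intro hFZ
    have hdZ : d ∈ annSet B := hFZ (by simp)
    have hF'Z : ↑F ⊆ annSet B := fun x hx => hFZ (by simp [hx])
    have hfin := ih hF'Z
    have hed : e • d = 0 := he d hdZ
    set A0 : AddSubgroup B := AddSubgroup.closure (F : Set B) with hA0
    have hA0Z : (A0 : Set B) ⊆ annSet B := by
      rw [hA0]
      rw [show annSet B = ((⟨⟨⟨annSet B, fun h1 h2 => ann_add h1 h2⟩,
        ann_zero⟩, fun h => ann_neg h⟩ : AddSubgroup B) : Set B) from rfl]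
      exact AddSubgroup.closure_le _ |>.mpr hF'Z
    set C : Set B := ⋃ k ∈ Finset.range e, (fun v => k • d + v) '' (A0 : Set B)
      with hC
    have hCmem : ∀ w : B, w ∈ C ↔ ∃ k < e, ∃ v ∈ (A0 : Set B), w = k • d + v := by
      intro w
      simp only [hC, Set.mem_iUnion, Set.mem_image, Finset.mem_range]
      constructor
      · rintro ⟨k, hk, v, hv, rfl⟩; exact ⟨k, hk, v, hv, rfl⟩
      · rintro ⟨k, hk, v, hv, rfl⟩; exact ⟨k, hk, v, hv, rfl⟩
    have hCfin : C.Finite :=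
      Set.Finite.biUnion (Finset.range e).finite_toSet fun k _ => hfin.image _
    -- C is an additive subgroup
    have hzeroC : (0 : B) ∈ C := by
      rw [hCmem]
      exact ⟨0, hepos, 0, A0.zero_mem, by rw [zero_smul, add_zero]⟩
    have haddC : ∀ w ∈ C, ∀ w' ∈ C, w + w' ∈ C := by
      intro w hw w' hw'
      rw [hCmem] at hw hw' ⊢
      obtain ⟨k, hk, v, hv, rfl⟩ := hw
      obtain ⟨k', hk', v', hv', rfl⟩ := hw'
      have hvZ : v ∈ annSet B := hA0Z hv
      have e1 : (k • d + v) + (k' • d + v') = (k + k') • d + (v + v') := by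
        rw [add_nsmul, add_assoc (k • d) v (k' • d + v'),
          ← add_assoc v (k' • d) v', ann_add_comm hvZ (k' • d),
          add_assoc (k' • d) v v', ← add_assoc]
      rw [e1, nsmul_mod hed (k + k')]
      exact ⟨(k + k') % e, Nat.mod_lt _ hepos, v + v', A0.add_mem hv hv', rfl⟩
    have hnegC : ∀ w ∈ C, -w ∈ C := by
      intro w hw
      rw [hCmem] at hw ⊢
      obtain ⟨k, hk, v, hv, rfl⟩ := hw
      have hvZ : v ∈ annSet B := hA0Z hv
      have hkdZ : k • d ∈ annSet B := ann_nsmul hdZ k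
      have hneg : -(k • d) = (e - k) • d := by
        have hsum : k • d + (e - k) • d = 0 := by
          rw [← add_nsmul, Nat.add_sub_cancel' (le_of_lt hk), hed]
        exact neg_eq_of_add_eq_zero_right hsum
      have e1 : -(k • d + v) = (e - k) • d + (-v) := by
        rw [neg_add_rev, ← ann_add_comm (ann_neg hkdZ) (-v), hneg]
      rw [e1, nsmul_mod hed (e - k)]
      exact ⟨(e - k) % e, Nat.mod_lt _ hepos, -v, A0.neg_mem hv, rfl⟩
    -- closure (insert d F) ⊆ C
    have hins : (↑(insert d F) : Set B) ⊆ C := by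
      intro x hx
      rw [Finset.coe_insert, Set.mem_insert_iff] at hx
      rcases hx with rfl | hx
      · rw [hCmem]
        refine ⟨1 % e, Nat.mod_lt _ hepos, 0, A0.zero_mem, ?_⟩
        rw [add_zero, ← nsmul_mod hed 1, one_nsmul]
      · rw [hCmem]
        exact ⟨0, hepos, x, AddSubgroup.subset_closure hx, by
          rw [zero_smul, zero_add]⟩
    have hle : AddSubgroup.closure (↑(insert d F) : Set B) ≤
        ⟨⟨⟨C, fun h1 h2 => haddC _ h1 _ h2⟩, hzeroC⟩, fun h => hnegC _ h⟩ :=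
      AddSubgroup.closure_le _ |>.mpr hins
    exact hCfin.subset hle

/-- From finiteness of the annihilator, a uniform additive exponent. -/
lemma exists_exponent (hfin : (annSet B).Finite) :
    ∃ e : ℕ, 0 < e ∧ ∀ z ∈ annSet B, e • z = 0 := by
  classical
  have horder : ∀ z ∈ annSet B, ∃ k : ℕ, 0 < k ∧ k • z = 0 := by
    intro z hz
    haveI := hfin.to_subtype
    have hnotinj : ¬ Function.Injective
        (fun k : ℕ => (⟨k • z, ann_nsmul hz k⟩ : ↥(annSet B))) := by
      intro hinj
      haveI := Finite.of_injective _ hinj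
      exact not_finite ℕ
    rw [Function.not_injective_iff] at hnotinj
    obtain ⟨i, j, hij, hne⟩ := hnotinj
    have hij' : i • z = j • z := Subtype.ext_iff.mp hij
    rcases Nat.lt_or_ge i j with hlt | hge
    · refine ⟨j - i, Nat.sub_pos_of_lt hlt, ?_⟩
      have : (j - i) • z + i • z = i • z := by
        rw [← add_nsmul, Nat.sub_add_cancel (le_of_lt hlt), hij']
      exact add_right_cancel (by rw [this, zero_add])
    · have hlt : j < i := lt_of_le_of_ne hge (fun h => hne (h ▸ rfl))
      refine ⟨i - j, Nat.sub_pos_of_lt hlt, ?_⟩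
      have : (i - j) • z + j • z = j • z := by
        rw [← add_nsmul, Nat.sub_add_cancel (le_of_lt hlt), ← hij']
      exact add_right_cancel (by rw [this, zero_add])
  set m : B → ℕ := fun z => if h : ∃ k : ℕ, 0 < k ∧ k • z = 0 then h.choose else 1
    with hm
  have hmpos : ∀ z : B, 0 < m z := by
    intro z
    simp only [hm]
    split
    · next h => exact h.choose_spec.1
    · exact Nat.one_pos
  have hmz : ∀ z ∈ annSet B, (m z) • z = 0 := by
    intro z hz
    have h := horder z hz
    simp only [hm, dif_pos h]
    exact h.choose_spec.2
  refine ⟨hfin.toFinset.prod m, Finset.prod_pos (fun z _ => hmpos z), ?_⟩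
  intro z hz
  have hzF : z ∈ hfin.toFinset := hfin.mem_toFinset.mpr hz
  obtain ⟨c, hc⟩ := Finset.dvd_prod_of_mem m hzF
  rw [hc, mul_nsmul, hmz z hz, smul_zero]

/-! ### Main induction -/

universe u

theorem main_aux : ∀ (n : ℕ) (C : Type u) [SkewBrace C],
    annSeries C n = Set.univ → SBFinitelyGenerated C →
    (∃ e : ℕ, 0 < e ∧ ∀ z ∈ annSet C, e • z = 0) → Finite C := by
  intro n
  induction n with
  | zero =>
    intro C _ hser _ _
    have hzero : ∀ b : C, b = 0 := fun b => by
      have hb : b ∈ annSeries C 0 := by rw [hser]; trivial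
      exact hb
    exact Finite.of_injective (fun _ : C => (0 : Fin 1))
      (fun a b _ => by rw [hzero a, hzero b])
  | succ n ih =>
    intro C _ hser hfg hexp
    obtain ⟨e, hepos, he⟩ := hexp
    haveI hQfin : Finite (QB C) :=
      ih (QB C) (series_univ_qb hser) (sbfg_qb hfg) ⟨e, hepos, ann_exp_qb he⟩
    obtain ⟨D, hDfin, hDZ, hsub⟩ := ann_fg_of_finite_qb hQfin hfg
    have hDF : (↑hDfin.toFinset : Set C) ⊆ annSet C := by
      rw [Set.Finite.coe_toFinset]; exact hDZ
    have hclos := closure_finite_of_torsion hepos he hDfin.toFinset hDF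
    rw [Set.Finite.coe_toFinset] at hclos
    have hZfin : (annSet C).Finite := hclos.subset hsub
    exact finite_of_qb hQfin hZfin

/-- Lemma 4.4: an annihilator nilpotent skew brace with finite annihilator that
is finitely generated as a skew brace is finite. -/
theorem stmt15 {B : Type*} [SkewBrace B] (hann : AnnNilpotent B)
    (hfin : (annSet B).Finite) (hfg : SBFinitelyGenerated B) :
    Finite B := by
  obtain ⟨n, hn⟩ := hann
  exact main_aux n B hn hfg (exists_exponent hfin)

end SkewBrace
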